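/- arXiv:1510.08570 — 2 statements merged into one kernel-verified Lean document; each statement's English description precedes it below -/
import Mathlib

section
/- For every τ ∈ (0,1), the penalized Fischer–Burmeister function φ_τ(a,b) := τ·((a + b) − √(a² + b²)) + (1 − τ)·max(a,0)·max(b,0) is an NCP-function: for all real a, b, one has φ_τ(a,b) = 0 if and only if a ≥ 0, b ≥ 0 and ab = 0. -/
/-- For every `τ ∈ (0,1)`, the penalized Fischer–Burmeister function
is an NCP-function. -/
theorem stmt_4 (τ : ℝ) (hτ : τ ∈ Set.Ioo (0 : ℝ) 1) (a b : ℝ) :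
    τ * ((a + b) - Real.sqrt (a ^ 2 + b ^ 2)) + (1 - τ) * (max a 0 * max b 0) = 0 ↔
      0 ≤ a ∧ 0 ≤ b ∧ a * b = 0 := by
  obtain ⟨hτ0, hτ1⟩ := hτ
  have hs0 : 0 ≤ Real.sqrt (a ^ 2 + b ^ 2) := Real.sqrt_nonneg _
  have hsq : Real.sqrt (a ^ 2 + b ^ 2) ^ 2 = a ^ 2 + b ^ 2 :=
    Real.sq_sqrt (by positivity)
  constructor
  · intro h
    by_cases hab : 0 < a ∧ 0 < b
    · exfalso
      obtain ⟨ha, hb⟩ := hab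
      have h1 : Real.sqrt (a ^ 2 + b ^ 2) < a + b := by nlinarith
      have h2 : max a 0 = a := max_eq_left ha.le
      have h3 : max b 0 = b := max_eq_left hb.le
      rw [h2, h3] at h
      nlinarith [mul_pos hτ0 (sub_pos.mpr h1),
        mul_pos (by linarith : (0:ℝ) < 1 - τ) (mul_pos ha hb)]
    · have hp : max a 0 * max b 0 = 0 := by
        rcases not_and_or.mp hab with h' | h'
        · simp [max_eq_right (le_of_not_gt h')]
        · simp [max_eq_right (le_of_not_gt h')]
      rw [hp] at h
      have hfb : a + b - Real.sqrt (a ^ 2 + b ^ 2) = 0 := by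
        rcases mul_eq_zero.mp
            (by linarith : τ * ((a + b) - Real.sqrt (a ^ 2 + b ^ 2)) = 0) with h' | h'
        · linarith
        · linarith
      have hsum : a + b = Real.sqrt (a ^ 2 + b ^ 2) := by linarith
      have habz : a * b = 0 := by nlinarith
      have hab0 : 0 ≤ a + b := by rw [hsum]; exact hs0
      rcases mul_eq_zero.mp habz with h' | h'
      · exact ⟨h'.ge, by linarith, habz⟩
      · exact ⟨by linarith, h'.ge, habz⟩
  · rintro ⟨ha, hb, hab⟩
    have hs : Real.sqrt (a ^ 2 + b ^ 2) = a + b := by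
      rw [show a ^ 2 + b ^ 2 = (a + b) ^ 2 by nlinarith, Real.sqrt_sq (by linarith)]
    rw [hs, max_eq_left ha, max_eq_left hb, hab]
    ring
end

section
/- Let τ ∈ (0,1). The penalized Fischer–Burmeister function φ_τ(a,b) := τ·((a + b) − √(a² + b²)) + (1 − τ)·max(a,0)·max(b,0) is differentiable at every point (a,b) ∈ ℝ² that does NOT satisfy the complementarity conditions, i.e. at every (a,b) such that it is not the case that a ≥ 0, b ≥ 0 and ab = 0. -/
/-- The penalized Fischer–Burmeister function on `ℝ × ℝ`. -/
noncomputable def phiTau (τ : ℝ) (p : ℝ × ℝ) : ℝ :=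
  τ * ((p.1 + p.2) - Real.sqrt (p.1 ^ 2 + p.2 ^ 2)) + (1 - τ) * (max p.1 0 * max p.2 0)

/-- for `τ ∈ (0,1)`, `φ_τ` is differentiable at every point `(a,b)` that
does not satisfy the complementarity conditions `a ≥ 0, b ≥ 0, ab = 0`. -/
theorem stmt_11 (τ : ℝ) (hτ : τ ∈ Set.Ioo (0 : ℝ) 1) (p : ℝ × ℝ)
    (hp : ¬ (0 ≤ p.1 ∧ 0 ≤ p.2 ∧ p.1 * p.2 = 0)) :
    DifferentiableAt ℝ (phiTau τ) p := by
  push_neg at hp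
  have hcase : p.1 < 0 ∨ p.2 < 0 ∨ (0 < p.1 ∧ 0 < p.2) := by
    rcases lt_or_ge p.1 0 with h1 | h1
    · exact Or.inl h1
    rcases lt_or_ge p.2 0 with h2 | h2
    · exact Or.inr (Or.inl h2)
    have hne := hp h1 h2
    exact Or.inr (Or.inr ⟨lt_of_le_of_ne h1 fun h => hne (by rw [← h]; ring),
      lt_of_le_of_ne h2 fun h => hne (by rw [← h]; ring)⟩)
  have hpos : (0 : ℝ) < p.1 ^ 2 + p.2 ^ 2 := by
    rcases hcase with h | h | ⟨h1, h2⟩ <;> nlinarith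
  have h1 : DifferentiableAt ℝ
      (fun q : ℝ × ℝ => τ * ((q.1 + q.2) - Real.sqrt (q.1 ^ 2 + q.2 ^ 2))) p := by
    apply DifferentiableAt.const_mul
    exact (differentiableAt_fst.add differentiableAt_snd).sub
      ((((differentiableAt_fst.pow 2).add (differentiableAt_snd.pow 2)).sqrt hpos.ne'))
  have h2 : DifferentiableAt ℝ (fun q : ℝ × ℝ => max q.1 0 * max q.2 0) p := by
    rcases hcase with h | h | ⟨ha, hb⟩
    · have hev : (fun q : ℝ × ℝ => max q.1 0 * max q.2 0) =ᶠ[nhds p] fun _ => (0 : ℝ) := by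
        filter_upwards [(isOpen_lt continuous_fst continuous_const).mem_nhds h] with q hq
        simp [max_eq_right hq.le]
      exact (differentiableAt_const (0 : ℝ)).congr_of_eventuallyEq hev
    · have hev : (fun q : ℝ × ℝ => max q.1 0 * max q.2 0) =ᶠ[nhds p] fun _ => (0 : ℝ) := by
        filter_upwards [(isOpen_lt continuous_snd continuous_const).mem_nhds h] with q hq
        simp [max_eq_right hq.le]
      exact (differentiableAt_const (0 : ℝ)).congr_of_eventuallyEq hev
    · have hev : (fun q : ℝ × ℝ => max q.1 0 * max q.2 0) =ᶠ[nhds p]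
          fun q : ℝ × ℝ => q.1 * q.2 := by
        filter_upwards [(isOpen_lt continuous_const continuous_fst).mem_nhds ha,
          (isOpen_lt continuous_const continuous_snd).mem_nhds hb] with q hq1 hq2
        simp [max_eq_left hq1.le, max_eq_left hq2.le]
      exact (differentiableAt_fst.mul differentiableAt_snd).congr_of_eventuallyEq hev
  exact h1.add (h2.const_mul (1 - τ))
end
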